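/- (Theorem 2, Case 1) Suppose 0 < h̲ < h̄, P_m > 0 and ε > 0. Let h† > 0 be the unique solution of the fixed-point equation h = −(180·b·L)/(π·ξ_L)·[1 − p_B(h)] (the unconstrained optimal height), and let h‡ > 0 be the unique solution of D(P_m, h) = 2ε². If h† ≤ h̲ and h‡ ≤ h̲, then (h̲, P_m) maximizes γ(P, h) over all (P, h) with 0 < P ≤ P_m, D(P, h) ≤ 2ε², and h̲ ≤ h ≤ h̄. -/

import Mathlib

/-- LoS probability for a UAV at height `h` directly above Willie, with Bob at
horizontal distance `L`. -/
noncomputable def pB (a b L h : ℝ) : ℝ :=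
  1 / (1 + a * Real.exp (-b * ((180 / Real.pi) * Real.arctan (h / L) - a)))

/-- Effective SNR at Bob in the vertical-UAV setting: `γ(P, h) = P·(L² + h²)^{ξ_L/2}·p_B(h)/σ_b²`. -/
noncomputable def γV (a b L ξL σb2 P h : ℝ) : ℝ :=
  P * (L ^ 2 + h ^ 2) ^ (ξL / 2) * pB a b L h / σb2

/-- KL divergence in the vertical-UAV setting, with `P̄ = P·(h^{ξ_L} + h^{ξ_N})`. -/
noncomputable def DV (ξL ξN σw2 : ℝ) (n : ℕ) (P h : ℝ) : ℝ :=
  ((n : ℝ) / 2) * (Real.log ((P * (h ^ ξL + h ^ ξN) + σw2) / σw2) -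
    P * (h ^ ξL + h ^ ξN) / (P * (h ^ ξL + h ^ ξN) + σw2))

private lemma pB_denom_pos (a b L h : ℝ) (ha : 0 < a) :
    0 < 1 + a * Real.exp (-b * ((180 / Real.pi) * Real.arctan (h / L) - a)) := by positivity

private lemma pB_pos (a b L h : ℝ) (ha : 0 < a) : 0 < pB a b L h :=
  div_pos one_pos (pB_denom_pos a b L h ha)

private lemma pB_mono (a b L : ℝ) (ha : 0 < a) (hb : 0 < b) (hL : 0 < L) :
    Monotone (pB a b L) := by
  intro x y hxy
  unfold pB
  have hdy := pB_denom_pos a b L y ha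
  apply one_div_le_one_div_of_le hdy
  have ht : Real.arctan (x / L) ≤ Real.arctan (y / L) :=
    Real.arctan_strictMono.monotone (by gcongr)
  have hc : (0:ℝ) ≤ 180 / Real.pi := by positivity
  have hexp : Real.exp (-b * ((180 / Real.pi) * Real.arctan (y / L) - a)) ≤
      Real.exp (-b * ((180 / Real.pi) * Real.arctan (x / L) - a)) := by
    apply Real.exp_le_exp.2
    nlinarith [mul_le_mul_of_nonneg_left ht hc]
  linarith [mul_le_mul_of_nonneg_left hexp ha.le]

/-- derivative of `h ↦ (L²+h²)^{ξL/2} · pB h`. -/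
private lemma hasDerivAt_f (a b L ξL : ℝ) (ha : 0 < a) (hL : 0 < L) (x : ℝ) :
    HasDerivAt (fun z => (L ^ 2 + z ^ 2) ^ (ξL / 2) * pB a b L z)
      ((L ^ 2 + x ^ 2) ^ (ξL / 2 - 1) * pB a b L x *
        (ξL * x + 180 / Real.pi * b * L * (1 - pB a b L x))) x := by
  have hD : 0 < L ^ 2 + x ^ 2 := by positivity
  have hdx := pB_denom_pos a b L x ha
  have hq : HasDerivAt (fun z : ℝ => z / L) (1 / L) x := by
    simpa using (hasDerivAt_id x).div_const L
  have hArc : HasDerivAt (fun z => Real.arctan (z / L))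
      (1 / (1 + (x / L) ^ 2) * (1 / L)) x := hq.arctan
  have hE : HasDerivAt (fun z => -b * ((180 / Real.pi) * Real.arctan (z / L) - a))
      (-b * ((180 / Real.pi) * (1 / (1 + (x / L) ^ 2) * (1 / L)))) x :=
    (((hArc.const_mul (180 / Real.pi)).sub_const a).const_mul (-b))
  have he : HasDerivAt
      (fun z => a * Real.exp (-b * ((180 / Real.pi) * Real.arctan (z / L) - a)))
      (a * (Real.exp (-b * ((180 / Real.pi) * Real.arctan (x / L) - a)) *
        (-b * ((180 / Real.pi) * (1 / (1 + (x / L) ^ 2) * (1 / L)))))) x :=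
    (hE.exp).const_mul a
  have hpB : HasDerivAt (pB a b L)
      (-(a * (Real.exp (-b * ((180 / Real.pi) * Real.arctan (x / L) - a)) *
        (-b * ((180 / Real.pi) * (1 / (1 + (x / L) ^ 2) * (1 / L)))))) /
        (1 + a * Real.exp (-b * ((180 / Real.pi) * Real.arctan (x / L) - a))) ^ 2) x := by
    have hinv := (he.const_add 1).inv hdx.ne'
    unfold pB
    simpa only [one_div, Pi.inv_def] using hinv
  have hu : HasDerivAt (fun z : ℝ => (L ^ 2 + z ^ 2) ^ (ξL / 2))
      ((2 * x) * (ξL / 2) * (L ^ 2 + x ^ 2) ^ (ξL / 2 - 1)) x := by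
    have hw : HasDerivAt (fun z : ℝ => L ^ 2 + z ^ 2) (2 * x) x := by
      simpa using ((hasDerivAt_pow 2 x).const_add (L ^ 2))
    exact hw.rpow_const (Or.inl hD.ne')
  have hf : HasDerivAt (fun z => (L ^ 2 + z ^ 2) ^ (ξL / 2) * pB a b L z) _ x := hu.mul hpB
  convert hf using 1
  have hDpow : (L ^ 2 + x ^ 2) ^ (ξL / 2) = (L ^ 2 + x ^ 2) ^ (ξL / 2 - 1) * (L ^ 2 + x ^ 2) := by
    rw [Real.rpow_sub_one hD.ne']
    field_simp
  simp only [pB, hDpow]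
  have h1 : 1 + (x / L) ^ 2 = (L ^ 2 + x ^ 2) / L ^ 2 := by field_simp
  rw [h1]
  field_simp
  ring

private lemma f_anti (a b L ξL hdag : ℝ) (ha : 0 < a) (hb : 0 < b) (hL : 0 < L)
    (hξL : ξL < 0)
    (hdag_eq : hdag = -(180 * b * L) / (Real.pi * ξL) * (1 - pB a b L hdag)) :
    AntitoneOn (fun z => (L ^ 2 + z ^ 2) ^ (ξL / 2) * pB a b L z) (Set.Ici hdag) := by
  have hπ : (0:ℝ) < Real.pi := Real.pi_pos
  have h0 : ξL * hdag + 180 / Real.pi * b * L * (1 - pB a b L hdag) = 0 := by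
    have h := hdag_eq
    have hπne : Real.pi ≠ 0 := Real.pi_ne_zero
    have hξLne : ξL ≠ 0 := hξL.ne
    field_simp at h ⊢
    linear_combination h
  have hdiff : ∀ x : ℝ, DifferentiableAt ℝ
      (fun z => (L ^ 2 + z ^ 2) ^ (ξL / 2) * pB a b L z) x :=
    fun x => (hasDerivAt_f a b L ξL ha hL x).differentiableAt
  apply antitoneOn_of_deriv_nonpos (convex_Ici hdag)
  · exact fun x _ => (hdiff x).continuousAt.continuousWithinAt
  · exact fun x _ => (hdiff x).differentiableWithinAt
  · intro x hx
    rw [interior_Ici] at hx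
    rw [(hasDerivAt_f a b L ξL ha hL x).deriv]
    have hgx : ξL * x + 180 / Real.pi * b * L * (1 - pB a b L x) ≤ 0 := by
      have hm := pB_mono a b L ha hb hL (le_of_lt hx)
      have hc : (0:ℝ) ≤ 180 / Real.pi * b * L := by positivity
      nlinarith [mul_le_mul_of_nonpos_left (le_of_lt hx) hξL.le,
        mul_le_mul_of_nonneg_left (by linarith : 1 - pB a b L x ≤ 1 - pB a b L hdag) hc]
    exact mul_nonpos_of_nonneg_of_nonpos
      (mul_nonneg (Real.rpow_pos_of_pos (by positivity) _).le (pB_pos a b L x ha).le) hgx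

private lemma phi_mono (σ t1 t2 : ℝ) (hσ : 0 < σ) (h1 : 0 ≤ t1) (h12 : t1 ≤ t2) :
    Real.log ((t1 + σ) / σ) - t1 / (t1 + σ) ≤ Real.log ((t2 + σ) / σ) - t2 / (t2 + σ) := by
  have hx1 : 0 < t1 + σ := by linarith
  have hx2 : 0 < t2 + σ := by linarith
  have hlog : Real.log ((t1 + σ) / (t2 + σ)) ≤ (t1 + σ) / (t2 + σ) - 1 :=
    Real.log_le_sub_one_of_pos (div_pos hx1 hx2)
  rw [Real.log_div hx1.ne' hx2.ne'] at hlog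
  rw [Real.log_div hx1.ne' hσ.ne', Real.log_div hx2.ne' hσ.ne']
  have key : t2 / (t2 + σ) - t1 / (t1 + σ) ≤ 1 - (t1 + σ) / (t2 + σ) := by
    have e1 : t2 / (t2 + σ) - t1 / (t1 + σ) = σ * (t2 - t1) / ((t2 + σ) * (t1 + σ)) := by
      field_simp
      ring
    have e2 : 1 - (t1 + σ) / (t2 + σ) = (t2 - t1) / (t2 + σ) := by
      field_simp
      ring
    rw [e1, e2, div_le_div_iff₀ (by positivity) hx2]
    nlinarith [mul_nonneg (mul_nonneg (sub_nonneg.2 h12) hx2.le) h1]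
  linarith

/-- Theorem 2, Case 1: if the unconstrained optimal height `h†` (the unique positive
solution of the fixed-point equation `h = −(180·b·L)/(π·ξ_L)·(1 − p_B(h))`) and the
unique positive solution `h‡` of `D(P_m, h) = 2ε²` both satisfy `h† ≤ h̲` and `h‡ ≤ h̲`,
then `(h̲, P_m)` is feasible and maximizes `γ(P, h)` over all `(P, h)` with
`0 < P ≤ P_m`, `D(P, h) ≤ 2ε²`, and `h̲ ≤ h ≤ h̄`. -/
theorem stmt_18 (a b L ξL ξN σb2 σw2 Pm ε hlo hhi hdag hddag : ℝ) (n : ℕ)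
    (ha : 0 < a) (hb : 0 < b) (hL : 0 < L) (hξL : ξL < 0) (hξN : ξN < 0)
    (hn : 1 ≤ n) (hσb : 0 < σb2) (hσw : 0 < σw2)
    (hh : 0 < hlo) (hh' : hlo < hhi) (hPm : 0 < Pm) (hε : 0 < ε)
    (hdag_pos : 0 < hdag)
    (hdag_eq : hdag = -(180 * b * L) / (Real.pi * ξL) * (1 - pB a b L hdag))
    (hdag_uniq : ∀ h : ℝ, 0 < h →
      h = -(180 * b * L) / (Real.pi * ξL) * (1 - pB a b L h) → h = hdag)
    (hddag_pos : 0 < hddag)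
    (hddag_eq : DV ξL ξN σw2 n Pm hddag = 2 * ε ^ 2)
    (hddag_uniq : ∀ h : ℝ, 0 < h → DV ξL ξN σw2 n Pm h = 2 * ε ^ 2 → h = hddag)
    (hcase1 : hdag ≤ hlo) (hcase1' : hddag ≤ hlo) :
    (0 < Pm ∧ Pm ≤ Pm ∧ DV ξL ξN σw2 n Pm hlo ≤ 2 * ε ^ 2 ∧ hlo ≤ hlo ∧ hlo ≤ hhi) ∧
    (∀ P h : ℝ,
      (0 < P ∧ P ≤ Pm ∧ DV ξL ξN σw2 n P h ≤ 2 * ε ^ 2 ∧ hlo ≤ h ∧ h ≤ hhi) →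
      γV a b L ξL σb2 P h ≤ γV a b L ξL σb2 Pm hlo) := by
  constructor
  · refine ⟨hPm, le_refl _, ?_, le_refl _, hh'.le⟩
    -- DV(Pm, hlo) ≤ DV(Pm, hddag) = 2ε²
    have hrL : hlo ^ ξL ≤ hddag ^ ξL :=
      Real.rpow_le_rpow_of_nonpos hddag_pos hcase1' hξL.le
    have hrN : hlo ^ ξN ≤ hddag ^ ξN :=
      Real.rpow_le_rpow_of_nonpos hddag_pos hcase1' hξN.le
    have hlo_nonneg : (0:ℝ) ≤ hlo ^ ξL + hlo ^ ξN := by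
      have := Real.rpow_pos_of_pos hh ξL
      have := Real.rpow_pos_of_pos hh ξN
      linarith
    have ht : Pm * (hlo ^ ξL + hlo ^ ξN) ≤ Pm * (hddag ^ ξL + hddag ^ ξN) := by
      apply mul_le_mul_of_nonneg_left (by linarith) hPm.le
    have ht0 : 0 ≤ Pm * (hlo ^ ξL + hlo ^ ξN) := mul_nonneg hPm.le hlo_nonneg
    have := phi_mono σw2 (Pm * (hlo ^ ξL + hlo ^ ξN)) (Pm * (hddag ^ ξL + hddag ^ ξN))
      hσw ht0 ht
    have hDV : DV ξL ξN σw2 n Pm hlo ≤ DV ξL ξN σw2 n Pm hddag := by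
      unfold DV
      apply mul_le_mul_of_nonneg_left this (by positivity)
    linarith [hddag_eq, hDV]
  · intro P h ⟨hP, hPle, _, hlh, _⟩
    have hfa := f_anti a b L ξL hdag ha hb hL hξL hdag_eq
    have hfle : (L ^ 2 + h ^ 2) ^ (ξL / 2) * pB a b L h ≤
        (L ^ 2 + hlo ^ 2) ^ (ξL / 2) * pB a b L hlo :=
      hfa (Set.mem_Ici.2 hcase1) (Set.mem_Ici.2 (hcase1.trans hlh)) hlh
    have hfnn : 0 ≤ (L ^ 2 + h ^ 2) ^ (ξL / 2) * pB a b L h :=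
      mul_nonneg (Real.rpow_pos_of_pos (by positivity) _).le (pB_pos a b L h ha).le
    have hnum : P * ((L ^ 2 + h ^ 2) ^ (ξL / 2) * pB a b L h) ≤
        Pm * ((L ^ 2 + hlo ^ 2) ^ (ξL / 2) * pB a b L hlo) :=
      mul_le_mul hPle hfle hfnn hPm.le
    unfold γV
    rw [mul_assoc, mul_assoc]
    exact div_le_div_of_nonneg_right hnum hσb.le
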